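/- Let A and B be complex n×n matrices. If there exists a unitary n×n matrix P such that PA and PB are both positive semidefinite, then E(A + B) = E(A) + E(B), where E denotes the sum of singular values. -/

import Mathlib

open scoped ComplexOrder

/-- The energy of a complex square matrix `M` is the sum of its singular values,
i.e. the trace of `|M| = (Mᴴ M)^{1/2}`. -/
noncomputable def matrixEnergy {n : ℕ} (M : Matrix (Fin n) (Fin n) ℂ) : ℝ :=
  (((Matrix.posSemidef_conjTranspose_mul_self M).1.eigenvectorUnitary.1 *
      Matrix.diagonal (((↑) : ℝ → ℂ) ∘ (√·) ∘ (Matrix.posSemidef_conjTranspose_mul_self M).1.eigenvalues) *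
      (star (Matrix.posSemidef_conjTranspose_mul_self M).1.eigenvectorUnitary :
        Matrix (Fin n) (Fin n) ℂ)).trace).re

lemma sqrt_eq_of_psd {n : ℕ} {P A : Matrix (Fin n) (Fin n) ℂ}
    (hP : P ∈ Matrix.unitaryGroup (Fin n) ℂ) (h : (P * A).PosSemidef) :
    (Matrix.posSemidef_conjTranspose_mul_self A).1.eigenvectorUnitary.1 *
      Matrix.diagonal (((↑) : ℝ → ℂ) ∘ (√·) ∘ (Matrix.posSemidef_conjTranspose_mul_self A).1.eigenvalues) *
      (star (Matrix.posSemidef_conjTranspose_mul_self A).1.eigenvectorUnitary :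
        Matrix (Fin n) (Fin n) ℂ) = P * A := by
  open scoped MatrixOrder in
  have hc : (Matrix.posSemidef_conjTranspose_mul_self A).1.eigenvectorUnitary.1 *
      Matrix.diagonal (((↑) : ℝ → ℂ) ∘ (√·) ∘ (Matrix.posSemidef_conjTranspose_mul_self A).1.eigenvalues) *
      (star (Matrix.posSemidef_conjTranspose_mul_self A).1.eigenvectorUnitary :
        Matrix (Fin n) (Fin n) ℂ) = CFC.sqrt (A.conjTranspose * A) := by
    rw [CFC.sqrt_eq_real_sqrt _ (Matrix.nonneg_iff_posSemidef.mpr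
      (Matrix.posSemidef_conjTranspose_mul_self A)), cfcₙ_eq_cfc,
      (Matrix.posSemidef_conjTranspose_mul_self A).1.cfc_eq]
    simp [Matrix.IsHermitian.cfc, Unitary.conjStarAlgAut_apply]
  rw [hc]
  open scoped MatrixOrder in
  refine CFC.sqrt_unique ?_ (Matrix.nonneg_iff_posSemidef.mpr h)
  nth_rewrite 1 [← h.isHermitian.eq]
  have h1 : star P * P = 1 := hP.1
  rw [Matrix.conjTranspose_mul, Matrix.mul_assoc,
    show P.conjTranspose * (P * A) = A from by
      rw [← Matrix.mul_assoc, show P.conjTranspose = star P from rfl, h1, Matrix.one_mul]]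

theorem matrixEnergy_add_eq_of_unitary {n : ℕ} (A B : Matrix (Fin n) (Fin n) ℂ)
    (h : ∃ P ∈ Matrix.unitaryGroup (Fin n) ℂ,
      (P * A).PosSemidef ∧ (P * B).PosSemidef) :
    matrixEnergy (A + B) = matrixEnergy A + matrixEnergy B := by
  obtain ⟨P, hP, hA, hB⟩ := h
  have hAB : (P * (A + B)).PosSemidef := by rw [Matrix.mul_add]; exact hA.add hB
  unfold matrixEnergy
  rw [sqrt_eq_of_psd hP hA, sqrt_eq_of_psd hP hB, sqrt_eq_of_psd hP hAB,
    Matrix.mul_add, Matrix.trace_add, Complex.add_re]
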